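/- For every real number x ≠ 0 one has x · cosh(x)/sinh(x) < 1 + x²/3, i.e. x·coth(x) < 1 + x²/3. -/

import Mathlib

open Real

private lemma aux_deriv1 (x : ℝ) :
    HasDerivAt (fun y => y * Real.cosh y - Real.sinh y) (x * Real.sinh x) x := by
  have h := ((hasDerivAt_id x).mul (Real.hasDerivAt_cosh x)).sub (Real.hasDerivAt_sinh x)
  simp only [id_eq] at h
  refine h.congr_deriv ?_
  ring

private lemma sinh_lt_mul_cosh {x : ℝ} (hx : 0 < x) : Real.sinh x < x * Real.cosh x := by
  have hmono : StrictMonoOn (fun y => y * Real.cosh y - Real.sinh y) (Set.Ici 0) := by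
    apply strictMonoOn_of_deriv_pos (convex_Ici 0)
    · exact (Continuous.sub (continuous_id.mul Real.continuous_cosh)
        Real.continuous_sinh).continuousOn
    · intro y hy
      rw [interior_Ici] at hy
      rw [(aux_deriv1 y).deriv]
      exact mul_pos hy (Real.sinh_pos_iff.mpr hy)
  have := hmono Set.self_mem_Ici (Set.mem_Ici.mpr hx.le) hx
  simpa using this

private lemma aux_deriv2 (x : ℝ) :
    HasDerivAt (fun y => (1 + y ^ 2 / 3) * Real.sinh y - y * Real.cosh y)
      (x / 3 * (x * Real.cosh x - Real.sinh x)) x := by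
  have h1 : HasDerivAt (fun y : ℝ => 1 + y ^ 2 / 3) (2 * x / 3) x := by
    have := ((hasDerivAt_pow 2 x).div_const 3).const_add 1
    refine this.congr_deriv ?_
    push_cast
    ring
  have h := (h1.mul (Real.hasDerivAt_sinh x)).sub
    ((hasDerivAt_id x).mul (Real.hasDerivAt_cosh x))
  simp only [id_eq] at h
  refine h.congr_deriv ?_
  ring

private lemma mul_cosh_lt {x : ℝ} (hx : 0 < x) :
    x * Real.cosh x < (1 + x ^ 2 / 3) * Real.sinh x := by
  have hmono : StrictMonoOn (fun y => (1 + y ^ 2 / 3) * Real.sinh y - y * Real.cosh y)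
      (Set.Ici 0) := by
    apply strictMonoOn_of_deriv_pos (convex_Ici 0)
    · exact (Continuous.sub
        ((continuous_const.add ((continuous_id.pow 2).div_const 3)).mul Real.continuous_sinh)
        (continuous_id.mul Real.continuous_cosh)).continuousOn
    · intro y hy
      rw [interior_Ici] at hy
      rw [(aux_deriv2 y).deriv]
      exact mul_pos (div_pos hy (by norm_num)) (sub_pos.mpr (sinh_lt_mul_cosh hy))
  have := hmono Set.self_mem_Ici (Set.mem_Ici.mpr hx.le) hx
  simp only [Real.sinh_zero, Real.cosh_zero] at this
  linarith

/-- For every nonzero real `x`, `x · coth x < 1 + x²/3`. -/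
theorem coth_lt_one_add_sq_div_three (x : ℝ) (hx : x ≠ 0) :
    x * Real.cosh x / Real.sinh x < 1 + x ^ 2 / 3 := by
  rcases hx.lt_or_gt with h | h
  · have hx' : 0 < -x := by linarith
    have hs : Real.sinh x < 0 := by
      have := Real.sinh_pos_iff.mpr hx'
      rw [Real.sinh_neg] at this
      linarith
    have key := mul_cosh_lt hx'
    rw [Real.cosh_neg, Real.sinh_neg, neg_sq] at key
    rw [div_lt_iff_of_neg hs]
    nlinarith [key]
  · have hs : 0 < Real.sinh x := Real.sinh_pos_iff.mpr h
    rw [div_lt_iff₀ hs]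
    exact mul_cosh_lt h
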